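/- The formal power series F(x,y) = x + y − log(1 − (e^x − 1)(e^y − 1)) in ℚ[[x,y]] satisfies the partial differential equation ∂_x ∂_y F = (∂_x F) · (∂_y F), is symmetric in x and y, and satisfies F(x,0) = x. -/

import Mathlib

/-- The series `e^x` in `ℚ[[x,y]]`. -/
noncomputable def expX : MvPowerSeries (Fin 2) ℚ :=
  fun d => if d 1 = 0 then ((d 0).factorial : ℚ)⁻¹ else 0

/-- The series `e^y` in `ℚ[[x,y]]`. -/
noncomputable def expY : MvPowerSeries (Fin 2) ℚ :=
  fun d => if d 0 = 0 then ((d 1).factorial : ℚ)⁻¹ else 0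

/-- `-log(1-u) = ∑_{n ≥ 1} uⁿ/n` for a series `u` with zero constant term; since
`uⁿ` then has no coefficient in total degree `< n`, the coefficient in degree `d` is
the (finite) sum over `1 ≤ n ≤ |d|`. -/
noncomputable def negLogOneSub (u : MvPowerSeries (Fin 2) ℚ) : MvPowerSeries (Fin 2) ℚ :=
  fun d => ∑ n ∈ Finset.range (d 0 + d 1 + 1), (n : ℚ)⁻¹ * ((u ^ n) d)

/-- Formal partial derivative in `x`. -/
noncomputable def dX (f : MvPowerSeries (Fin 2) ℚ) : MvPowerSeries (Fin 2) ℚ :=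
  fun d => ((d 0 : ℚ) + 1) * f (d + Finsupp.single 0 1)

/-- Formal partial derivative in `y`. -/
noncomputable def dY (f : MvPowerSeries (Fin 2) ℚ) : MvPowerSeries (Fin 2) ℚ :=
  fun d => ((d 1 : ℚ) + 1) * f (d + Finsupp.single 1 1)

/-- The series `F(x,y) = x + y - log(1 - (eˣ-1)(e^y-1))` in `ℚ[[x,y]]`. -/
noncomputable def F : MvPowerSeries (Fin 2) ℚ :=
  MvPowerSeries.X 0 + MvPowerSeries.X 1 + negLogOneSub ((expX - 1) * (expY - 1))


noncomputable def dd (i : Fin 2) (f : MvPowerSeries (Fin 2) ℚ) : MvPowerSeries (Fin 2) ℚ :=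
  fun d => ((d i : ℚ) + 1) * f (d + Finsupp.single i 1)

lemma dd_apply (i : Fin 2) (f : MvPowerSeries (Fin 2) ℚ) (d : Fin 2 →₀ ℕ) :
    dd i f d = ((d i : ℚ) + 1) * f (d + Finsupp.single i 1) := rfl

lemma mps_mul_apply (f g : MvPowerSeries (Fin 2) ℚ) (d : Fin 2 →₀ ℕ) :
    (f * g) d = ∑ p ∈ Finset.HasAntidiagonal.antidiagonal d, f p.1 * g p.2 := MvPowerSeries.coeff_mul d f g

lemma mps_one_apply (d : Fin 2 →₀ ℕ) : (1 : MvPowerSeries (Fin 2) ℚ) d = if d = 0 then 1 else 0 :=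
  MvPowerSeries.coeff_one d (R := ℚ)

lemma X_apply (j : Fin 2) (d : Fin 2 →₀ ℕ) :
    (MvPowerSeries.X j : MvPowerSeries (Fin 2) ℚ) d = if d = Finsupp.single j 1 then 1 else 0 :=
  MvPowerSeries.coeff_X d j (R := ℚ)

lemma add_apply' (f g : MvPowerSeries (Fin 2) ℚ) (d : Fin 2 →₀ ℕ) : (f + g) d = f d + g d := rfl
lemma sub_apply' (f g : MvPowerSeries (Fin 2) ℚ) (d : Fin 2 →₀ ℕ) : (f - g) d = f d - g d := rfl
lemma zero_apply' (d : Fin 2 →₀ ℕ) : (0 : MvPowerSeries (Fin 2) ℚ) d = 0 := rfl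
lemma smul_apply' (c : ℚ) (f : MvPowerSeries (Fin 2) ℚ) (d : Fin 2 →₀ ℕ) : (c • f) d = c * f d := rfl

lemma dd_add (i : Fin 2) (f g : MvPowerSeries (Fin 2) ℚ) : dd i (f + g) = dd i f + dd i g := by
  funext d; exact mul_add _ _ _

lemma dd_sub (i : Fin 2) (f g : MvPowerSeries (Fin 2) ℚ) : dd i (f - g) = dd i f - dd i g := by
  funext d; exact mul_sub _ _ _

lemma dd_one (i : Fin 2) : dd i 1 = 0 := by
  funext d
  have h : (d + Finsupp.single i 1) ≠ 0 := by
    intro h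
    have := congrArg (fun e : Fin 2 →₀ ℕ => e i) h
    simp [Finsupp.add_apply] at this
  rw [dd_apply, mps_one_apply, if_neg h, mul_zero, zero_apply']

lemma dd_X_self (i : Fin 2) : dd i (MvPowerSeries.X i) = 1 := by
  funext d
  rw [dd_apply, X_apply, mps_one_apply]
  by_cases h : d = 0
  · subst h; simp
  · rw [if_neg h, if_neg (fun hc => h (by
      have : d + Finsupp.single i 1 = 0 + Finsupp.single i 1 := by simpa using hc
      exact add_right_cancel this)), mul_zero]

lemma dd_X_ne (i j : Fin 2) (h : i ≠ j) : dd i (MvPowerSeries.X j) = 0 := by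
  funext d
  rw [dd_apply, X_apply, if_neg (fun hc => by
      have := congrArg (fun e : Fin 2 →₀ ℕ => e i) hc
      simp [Finsupp.add_apply, Finsupp.single_apply, h.symm] at this), mul_zero, zero_apply']

lemma sum_antidiagonal_swap (d : Fin 2 →₀ ℕ) (h : (Fin 2 →₀ ℕ) → (Fin 2 →₀ ℕ) → ℚ) :
    ∑ p ∈ Finset.HasAntidiagonal.antidiagonal d, h p.1 p.2 = ∑ p ∈ Finset.HasAntidiagonal.antidiagonal d, h p.2 p.1 := by
  apply Finset.sum_bij' (fun p _ => Prod.swap p) (fun p _ => Prod.swap p) <;>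
    intro a ha <;>
    simp_all [Finset.HasAntidiagonal.mem_antidiagonal, add_comm]

lemma shift_sum (i : Fin 2) (d : Fin 2 →₀ ℕ) (f g : MvPowerSeries (Fin 2) ℚ) :
    ∑ p ∈ Finset.HasAntidiagonal.antidiagonal (d + Finsupp.single i 1),
        (((p.1 : Fin 2 →₀ ℕ) i : ℚ)) * (f p.1 * g p.2)
    = ∑ q ∈ Finset.HasAntidiagonal.antidiagonal d,
        ((((q.1 : Fin 2 →₀ ℕ) i : ℚ)) + 1) * (f (q.1 + Finsupp.single i 1) * g q.2) := by
  classical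
  set s := Finsupp.single i 1 with hs
  set h : (Fin 2 →₀ ℕ) × (Fin 2 →₀ ℕ) → ℚ := fun p => ((p.1 i : ℚ)) * (f p.1 * g p.2) with hh
  have step1 : ∑ q ∈ Finset.HasAntidiagonal.antidiagonal d,
      (((q.1 i : ℚ)) + 1) * (f (q.1 + s) * g q.2)
      = ∑ q ∈ Finset.HasAntidiagonal.antidiagonal d, h (q.1 + s, q.2) := by
    apply Finset.sum_congr rfl
    intro q _
    simp only [hh]
    have : ((q.1 + s) i : ℚ) = (q.1 i : ℚ) + 1 := by
      simp [hs, Finsupp.add_apply]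
    rw [this]
  rw [step1]
  have hinj : ∀ x ∈ Finset.HasAntidiagonal.antidiagonal d, ∀ y ∈ Finset.HasAntidiagonal.antidiagonal d,
      (fun q : (Fin 2 →₀ ℕ) × (Fin 2 →₀ ℕ) => (q.1 + s, q.2)) x
      = (fun q : (Fin 2 →₀ ℕ) × (Fin 2 →₀ ℕ) => (q.1 + s, q.2)) y → x = y := by
    intro x _ y _ hxy
    simp only [Prod.mk.injEq] at hxy
    exact Prod.ext (add_right_cancel hxy.1) hxy.2
  rw [← Finset.sum_image hinj]
  apply (Finset.sum_subset _ _).symm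
  · intro p hp
    rw [Finset.mem_image] at hp
    obtain ⟨q, hq, rfl⟩ := hp
    rw [Finset.HasAntidiagonal.mem_antidiagonal] at hq ⊢
    rw [← hq]; exact (add_right_comm _ _ _)
  · intro p hp hnp
    by_cases hz : p.1 i = 0
    · simp [hh, hz]
    · exfalso
      apply hnp
      rw [Finset.mem_image]
      refine ⟨(p.1 - s, p.2), ?_, ?_⟩
      · rw [Finset.HasAntidiagonal.mem_antidiagonal] at hp ⊢
        have hle : s ≤ p.1 := by
          rw [hs, Finsupp.single_le_iff]; omega
        have : p.1 - s + s = p.1 := tsub_add_cancel_of_le hle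
        have h2 : (p.1 - s + p.2) + s = d + s := by
          rw [add_right_comm, this, hp]
        exact add_right_cancel h2
      · have hle : s ≤ p.1 := by
          rw [hs, Finsupp.single_le_iff]; omega
        have : p.1 - s + s = p.1 := tsub_add_cancel_of_le hle
        simp [this]

lemma dd_mul (i : Fin 2) (f g : MvPowerSeries (Fin 2) ℚ) :
    dd i (f * g) = dd i f * g + f * dd i g := by
  classical
  funext d
  set s := Finsupp.single i 1 with hs
  show ((d i : ℚ) + 1) * (f * g) (d + s) = (dd i f * g) d + (f * dd i g) d
  rw [mps_mul_apply, Finset.mul_sum, mps_mul_apply, mps_mul_apply]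
  have hterm : ∀ p ∈ Finset.HasAntidiagonal.antidiagonal (d + s),
      ((d i : ℚ) + 1) * (f p.1 * g p.2)
      = (p.1 i : ℚ) * (f p.1 * g p.2) + (p.2 i : ℚ) * (f p.1 * g p.2) := by
    intro p hp
    rw [Finset.HasAntidiagonal.mem_antidiagonal] at hp
    have : p.1 i + p.2 i = d i + 1 := by
      have := congrArg (fun e : Fin 2 →₀ ℕ => e i) hp
      simpa [hs, Finsupp.add_apply] using this
    rw [← add_mul]
    congr 1
    rw [← Nat.cast_add, this]
    push_cast
    ring
  rw [Finset.sum_congr rfl hterm, Finset.sum_add_distrib]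
  congr 1
  · rw [shift_sum]
    apply Finset.sum_congr rfl
    intro q _
    show _ = dd i f q.1 * g q.2
    show _ = _; simp only [dd]
    ring
  · have h1 : ∑ p ∈ Finset.HasAntidiagonal.antidiagonal (d + s), (p.2 i : ℚ) * (f p.1 * g p.2)
        = ∑ p ∈ Finset.HasAntidiagonal.antidiagonal (d + s), (p.1 i : ℚ) * (g p.1 * f p.2) := by
      rw [sum_antidiagonal_swap (d + s) (fun a b => (b i : ℚ) * (f a * g b))]
      apply Finset.sum_congr rfl
      intro p _
      ring
    rw [h1, shift_sum]
    rw [sum_antidiagonal_swap d (fun a b => ((a i : ℚ) + 1) * (g (a + s) * f b))]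
    apply Finset.sum_congr rfl
    intro q _
    show _ = f q.1 * dd i g q.2
    show _ = _; simp only [dd]
    ring

-- power rule
lemma dd_pow (i : Fin 2) (u : MvPowerSeries (Fin 2) ℚ) :
    ∀ n : ℕ, dd i (u ^ (n + 1)) = ((n : ℚ) + 1) • (u ^ n * dd i u) := by
  intro n
  induction n with
  | zero => simp [pow_one]
  | succ m ih =>
    have : u ^ (m + 2) = u ^ (m + 1) * u := by ring
    rw [this, dd_mul, ih]
    rw [smul_mul_assoc]
    have h1 : u ^ m * dd i u * u = u ^ (m + 1) * dd i u := by ring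
    rw [h1]
    push_cast
    module

-- low-order vanishing
def vlow (f : MvPowerSeries (Fin 2) ℚ) (n : ℕ) : Prop :=
  ∀ e : Fin 2 →₀ ℕ, e 0 + e 1 < n → f e = 0

lemma vlow_mul {f g : MvPowerSeries (Fin 2) ℚ} {m n : ℕ}
    (hf : vlow f m) (hg : vlow g n) : vlow (f * g) (m + n) := by
  intro e he
  rw [mps_mul_apply]
  apply Finset.sum_eq_zero
  intro p hp
  rw [Finset.HasAntidiagonal.mem_antidiagonal] at hp
  have h0 := congrArg (fun x : Fin 2 →₀ ℕ => x 0) hp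
  have h1 := congrArg (fun x : Fin 2 →₀ ℕ => x 1) hp
  simp only [Finsupp.add_apply] at h0 h1
  by_cases hc : p.1 0 + p.1 1 < m
  · rw [hf p.1 hc, zero_mul]
  · rw [hg p.2 (by omega), mul_zero]

lemma vlow_pow {u : MvPowerSeries (Fin 2) ℚ} (hu : vlow u 1) (n : ℕ) : vlow (u ^ n) n := by
  induction n with
  | zero => intro e he; omega
  | succ m ih =>
    rw [pow_succ]
    exact vlow_mul ih hu

lemma vlow_zero (f : MvPowerSeries (Fin 2) ℚ) : vlow f 0 := fun e he => by omega

-- locality of multiplication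
lemma mul_congr_le (g A B : MvPowerSeries (Fin 2) ℚ) (d : Fin 2 →₀ ℕ)
    (h : ∀ e : Fin 2 →₀ ℕ, e 0 + e 1 ≤ d 0 + d 1 → A e = B e) :
    (g * A) d = (g * B) d := by
  rw [mps_mul_apply, mps_mul_apply]
  apply Finset.sum_congr rfl
  intro p hp
  rw [Finset.HasAntidiagonal.mem_antidiagonal] at hp
  have h0 := congrArg (fun x : Fin 2 →₀ ℕ => x 0) hp
  have h1 := congrArg (fun x : Fin 2 →₀ ℕ => x 1) hp
  simp only [Finsupp.add_apply] at h0 h1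
  rw [h p.2 (by omega)]

lemma sum_apply'' (s : Finset ℕ) (f : ℕ → MvPowerSeries (Fin 2) ℚ) (d : Fin 2 →₀ ℕ) :
    (∑ n ∈ s, f n) d = ∑ n ∈ s, f n d := by
  rw [show (∑ n ∈ s, f n) d = MvPowerSeries.coeff d (∑ n ∈ s, f n) from rfl, map_sum]
  rfl

-- the key lemma
lemma dd_negLog (i : Fin 2) (u : MvPowerSeries (Fin 2) ℚ) (hu : vlow u 1) :
    (1 - u) * dd i (negLogOneSub u) = dd i u := by
  funext d
  set s := Finsupp.single i 1 with hs
  set L := negLogOneSub u with hL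
  -- step 1 : pointwise formula for dd i L
  have step1 : ∀ e : Fin 2 →₀ ℕ,
      dd i L e = ∑ m ∈ Finset.range (e 0 + e 1 + 1), (u ^ m * dd i u) e := by
    intro e
    have hes : (e + s) 0 + (e + s) 1 = e 0 + e 1 + 1 := by
      simp only [Finsupp.add_apply, hs, Finsupp.single_apply]
      fin_cases i <;> simp <;> ring
    show ((e i : ℚ) + 1) * L (e + s) = _
    rw [hL]
    show ((e i : ℚ) + 1) * (∑ n ∈ Finset.range ((e+s) 0 + (e+s) 1 + 1), (n : ℚ)⁻¹ * ((u ^ n) (e+s))) = _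
    rw [hes, Finset.mul_sum]
    rw [Finset.sum_range_succ']
    have hzero : ((e i : ℚ) + 1) * ((0:ℕ) : ℚ)⁻¹ * (u ^ 0) (e + s) = 0 := by
      norm_num
    have hterm : ∀ m, ((e i : ℚ) + 1) * ((((m+1 : ℕ)) : ℚ)⁻¹ * ((u ^ (m+1)) (e + s)))
        = (u ^ m * dd i u) e := by
      intro m
      have h1 : ((e i : ℚ) + 1) * ((((m+1 : ℕ)) : ℚ)⁻¹ * ((u ^ (m+1)) (e + s)))
          = ((m : ℚ) + 1)⁻¹ * (dd i (u ^ (m+1)) e) := by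
        show _ = ((m : ℚ) + 1)⁻¹ * (((e i : ℚ) + 1) * (u ^ (m+1)) (e + s))
        push_cast
        ring
      rw [h1, dd_pow]
      show ((m : ℚ) + 1)⁻¹ * (((m : ℚ) + 1) * ((u ^ m * dd i u) e)) = _
      rw [← mul_assoc, inv_mul_cancel₀ (by positivity), one_mul]
    calc (∑ m ∈ Finset.range (e 0 + e 1 + 1),
            ((e i : ℚ) + 1) * ((((m+1 : ℕ)) : ℚ)⁻¹ * ((u ^ (m+1)) (e + s))))
          + ((e i : ℚ) + 1) * ((((0 : ℕ)) : ℚ)⁻¹ * ((u ^ 0) (e + s)))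
        = ∑ m ∈ Finset.range (e 0 + e 1 + 1), (u ^ m * dd i u) e + 0 := by
          rw [Finset.sum_congr rfl (fun m _ => hterm m)]
          norm_num
      _ = ∑ m ∈ Finset.range (e 0 + e 1 + 1), (u ^ m * dd i u) e := by rw [add_zero]
  -- step 2: agreement with a fixed truncation
  set N := d 0 + d 1 + 1 with hN
  set GN : MvPowerSeries (Fin 2) ℚ := ∑ n ∈ Finset.range N, u ^ n * dd i u with hGN
  have step2 : ∀ e : Fin 2 →₀ ℕ, e 0 + e 1 ≤ d 0 + d 1 → dd i L e = GN e := by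
    intro e he
    rw [step1 e, hGN, sum_apply'']
    apply Finset.sum_subset
    · intro x hx
      rw [Finset.mem_range] at *
      omega
    · intro x hx hnx
      rw [Finset.mem_range] at hnx
      have hv : vlow (u ^ x * dd i u) x := by
        have := vlow_mul (vlow_pow hu x) (vlow_zero (dd i u))
        simpa using this
      exact hv e (by omega)
  show ((1 - u) * dd i L) d = dd i u d
  rw [mul_congr_le (1 - u) (dd i L) GN d step2]
  have key : (1 - u) * GN = dd i u - u ^ N * dd i u := by
    rw [hGN, ← Finset.sum_mul, ← mul_assoc]
    have hg : (1 - u) * (∑ n ∈ Finset.range N, u ^ n) = 1 - u ^ N := by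
      linear_combination (-1 : MvPowerSeries (Fin 2) ℚ) * mul_geom_sum u N
    rw [hg]
    ring
  rw [key]
  show dd i u d - (u ^ N * dd i u) d = dd i u d
  have hz : (u ^ N * dd i u) d = 0 := by
    have hv := vlow_mul (vlow_pow hu N) (vlow_zero (dd i u))
    simp only [add_zero] at hv
    exact hv d (by omega)
  rw [hz, sub_zero]

lemma fact_step (n : ℕ) : ((n : ℚ) + 1) * ((n + 1).factorial : ℚ)⁻¹ = ((n).factorial : ℚ)⁻¹ := by
  rw [Nat.factorial_succ]
  push_cast
  rw [mul_inv]
  rw [← mul_assoc, mul_inv_cancel₀ (by positivity), one_mul]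

lemma dd0_expX : dd 0 expX = expX := by
  funext d
  show ((d 0 : ℚ) + 1) * expX (d + Finsupp.single 0 1) = expX d
  simp only [expX, Finsupp.add_apply, Finsupp.single_apply]
  norm_num
  split
  · exact fact_step (d 0)
  · rfl

lemma dd1_expX : dd 1 expX = 0 := by
  funext d
  show ((d 1 : ℚ) + 1) * expX (d + Finsupp.single 1 1) = 0
  simp only [expX, Finsupp.add_apply, Finsupp.single_apply]
  norm_num

lemma dd1_expY : dd 1 expY = expY := by
  funext d
  show ((d 1 : ℚ) + 1) * expY (d + Finsupp.single 1 1) = expY d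
  simp only [expY, Finsupp.add_apply, Finsupp.single_apply]
  norm_num
  split
  · exact fact_step (d 1)
  · rfl

lemma dd0_expY : dd 0 expY = 0 := by
  funext d
  show ((d 0 : ℚ) + 1) * expY (d + Finsupp.single 0 1) = 0
  simp only [expY, Finsupp.add_apply, Finsupp.single_apply]
  norm_num
noncomputable def sw (d : Fin 2 →₀ ℕ) : Fin 2 →₀ ℕ :=
  Finsupp.equivMapDomain (Equiv.swap 0 1) d

lemma sw_apply0 (d : Fin 2 →₀ ℕ) : sw d 0 = d 1 := by
  simp [sw, Finsupp.equivMapDomain_apply]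
lemma sw_apply1 (d : Fin 2 →₀ ℕ) : sw d 1 = d 0 := by
  simp [sw, Finsupp.equivMapDomain_apply]

lemma fin2_cases (a : Fin 2) : a = 0 ∨ a = 1 := by omega

lemma sw_invol (d : Fin 2 →₀ ℕ) : sw (sw d) = d := by
  ext a
  rcases fin2_cases a with rfl | rfl
  · rw [sw_apply0, sw_apply1]
  · rw [sw_apply1, sw_apply0]

lemma sw_add (p q : Fin 2 →₀ ℕ) : sw (p + q) = sw p + sw q := by
  ext a
  rcases fin2_cases a with rfl | rfl <;>
    simp [sw_apply0, sw_apply1, Finsupp.add_apply]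

lemma sw_zero : sw 0 = 0 := by
  ext a
  rcases fin2_cases a with rfl | rfl <;> simp [sw_apply0, sw_apply1]

lemma sw_eq_zero_iff (d : Fin 2 →₀ ℕ) : sw d = 0 ↔ d = 0 := by
  constructor
  · intro h; have := congrArg sw h; rwa [sw_invol, sw_zero] at this
  · rintro rfl; exact sw_zero

lemma mul_sw (f g : MvPowerSeries (Fin 2) ℚ) (d : Fin 2 →₀ ℕ) :
    (f * g) (sw d) = ∑ q ∈ Finset.HasAntidiagonal.antidiagonal d, f (sw q.1) * g (sw q.2) := by
  rw [mps_mul_apply]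
  apply Finset.sum_bij' (fun (p : (Fin 2 →₀ ℕ) × (Fin 2 →₀ ℕ)) _ => (sw p.1, sw p.2))
    (fun (p : (Fin 2 →₀ ℕ) × (Fin 2 →₀ ℕ)) _ => (sw p.1, sw p.2))
  · intro a ha
    rw [Finset.HasAntidiagonal.mem_antidiagonal] at ha ⊢
    rw [← sw_add, ha, sw_invol]
  · intro a ha
    rw [Finset.HasAntidiagonal.mem_antidiagonal] at ha ⊢
    rw [← sw_add, ha]
  · intro a _; simp [sw_invol]
  · intro a _; simp [sw_invol]
  · intro a _; rw [sw_invol, sw_invol]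

lemma pow_sw {u : MvPowerSeries (Fin 2) ℚ} (hu : ∀ e, u (sw e) = u e) :
    ∀ (n : ℕ) (d : Fin 2 →₀ ℕ), (u ^ n) (sw d) = (u ^ n) d := by
  intro n
  induction n with
  | zero =>
    intro d
    show (1 : MvPowerSeries (Fin 2) ℚ) (sw d) = (1 : MvPowerSeries (Fin 2) ℚ) d
    rw [mps_one_apply, mps_one_apply]
    simp [sw_eq_zero_iff]
  | succ m ih =>
    intro d
    rw [pow_succ, mul_sw, mps_mul_apply]
    exact Finset.sum_congr rfl (fun p _ => by rw [ih, hu])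

lemma expX_sw (e : Fin 2 →₀ ℕ) : expX (sw e) = expY e := by
  simp [expX, expY, sw_apply0, sw_apply1]

lemma expY_sw (e : Fin 2 →₀ ℕ) : expY (sw e) = expX e := by
  simp [expX, expY, sw_apply0, sw_apply1]

lemma u_sw (e : Fin 2 →₀ ℕ) :
    ((expX - 1) * (expY - 1)) (sw e) = ((expX - 1) * (expY - 1)) e := by
  rw [mul_sw]
  have h : ∀ p ∈ Finset.HasAntidiagonal.antidiagonal e, (expX - 1) (sw p.1) * (expY - 1) (sw p.2)
      = (expY - 1) p.1 * (expX - 1) p.2 := by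
    intro p _
    show (expX (sw p.1) - (1:MvPowerSeries (Fin 2) ℚ) (sw p.1)) * (expY (sw p.2) - (1:MvPowerSeries (Fin 2) ℚ) (sw p.2)) = _
    rw [expX_sw, expY_sw]
    show _ = (expY p.1 - (1:MvPowerSeries (Fin 2) ℚ) p.1) * (expX p.2 - (1:MvPowerSeries (Fin 2) ℚ) p.2)
    simp only [mps_one_apply, sw_eq_zero_iff]
  rw [Finset.sum_congr rfl h, ← mps_mul_apply, mul_comm]

lemma L_sw (d : Fin 2 →₀ ℕ) :
    negLogOneSub ((expX - 1) * (expY - 1)) (sw d) = negLogOneSub ((expX - 1) * (expY - 1)) d := by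
  show (∑ n ∈ Finset.range (sw d 0 + sw d 1 + 1), _) = _
  rw [sw_apply0, sw_apply1, add_comm (d 1) (d 0)]
  exact Finset.sum_congr rfl (fun n _ => by rw [pow_sw u_sw n d])

lemma sw_single01 : sw (Finsupp.single 0 1) = Finsupp.single 1 1 := by
  ext a
  rcases fin2_cases a with rfl | rfl <;>
    simp [sw_apply0, sw_apply1, Finsupp.single_apply]

lemma sw_single11 : sw (Finsupp.single 1 1) = Finsupp.single 0 1 := by
  ext a
  rcases fin2_cases a with rfl | rfl <;>
    simp [sw_apply0, sw_apply1, Finsupp.single_apply]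

lemma sw_inj {p q : Fin 2 →₀ ℕ} (h : sw p = sw q) : p = q := by
  have := congrArg sw h
  rwa [sw_invol, sw_invol] at this

lemma X_sw (d : Fin 2 →₀ ℕ) :
    (MvPowerSeries.X 0 : MvPowerSeries (Fin 2) ℚ) (sw d)
      = (MvPowerSeries.X 1 : MvPowerSeries (Fin 2) ℚ) d := by
  rw [X_apply, X_apply]
  congr 1
  simp only [eq_iff_iff]
  constructor
  · intro h
    apply sw_inj
    rw [h, sw_single11]
  · rintro rfl
    exact sw_single11

lemma X_sw' (d : Fin 2 →₀ ℕ) :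
    (MvPowerSeries.X 1 : MvPowerSeries (Fin 2) ℚ) (sw d)
      = (MvPowerSeries.X 0 : MvPowerSeries (Fin 2) ℚ) d := by
  rw [X_apply, X_apply]
  congr 1
  simp only [eq_iff_iff]
  constructor
  · intro h
    apply sw_inj
    rw [h, sw_single01]
  · rintro rfl
    exact sw_single01

lemma F_sw (d : Fin 2 →₀ ℕ) : F (sw d) = F d := by
  show (MvPowerSeries.X 0 : MvPowerSeries (Fin 2) ℚ) (sw d) + (MvPowerSeries.X 1 : MvPowerSeries (Fin 2) ℚ) (sw d)
      + negLogOneSub ((expX - 1) * (expY - 1)) (sw d) = _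
  rw [X_sw, X_sw', L_sw]
  show _ = (MvPowerSeries.X 0 : MvPowerSeries (Fin 2) ℚ) d + (MvPowerSeries.X 1 : MvPowerSeries (Fin 2) ℚ) d
      + negLogOneSub ((expX - 1) * (expY - 1)) d
  ring

lemma F_symm (i j : ℕ) : F (Finsupp.single 0 i + Finsupp.single 1 j) =
    F (Finsupp.single 0 j + Finsupp.single 1 i) := by
  have h : sw (Finsupp.single 0 j + Finsupp.single 1 i) = Finsupp.single 0 i + Finsupp.single 1 j := by
    ext a
    rcases fin2_cases a with rfl | rfl <;>
      simp [sw_apply0, sw_apply1, Finsupp.add_apply, Finsupp.single_apply]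
  rw [← h, F_sw]


-- Part 3 helpers
lemma expY_sub_one_y0 (q : Fin 2 →₀ ℕ) (hq : q 1 = 0) : (expY - 1) q = 0 := by
  rw [sub_apply', mps_one_apply]
  by_cases h0 : q 0 = 0
  · have hq0 : q = 0 := by
      ext a
      rcases fin2_cases a with rfl | rfl
      · simpa using h0
      · simpa using hq
    subst hq0
    simp [expY]
  · have hqz : q ≠ 0 := fun h => h0 (by rw [h]; rfl)
    rw [if_neg hqz]
    simp [expY, h0]

lemma mul_eY_zero (f : MvPowerSeries (Fin 2) ℚ) (d : Fin 2 →₀ ℕ) (hd : d 1 = 0) :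
    (f * (expY - 1)) d = 0 := by
  rw [mps_mul_apply]
  apply Finset.sum_eq_zero
  intro p hp
  rw [Finset.HasAntidiagonal.mem_antidiagonal] at hp
  have h1 := congrArg (fun x : Fin 2 →₀ ℕ => x 1) hp
  simp only [Finsupp.add_apply] at h1
  rw [expY_sub_one_y0 p.2 (by omega), mul_zero]

lemma upow_y0 (n : ℕ) (d : Fin 2 →₀ ℕ) (hd : d 1 = 0) :
    ((((expX - 1) * (expY - 1))) ^ (n + 1)) d = 0 := by
  rw [pow_succ, ← mul_assoc]
  exact mul_eY_zero _ d hd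

lemma L_y0 (d : Fin 2 →₀ ℕ) (hd : d 1 = 0) :
    negLogOneSub ((expX - 1) * (expY - 1)) d = 0 := by
  show (∑ n ∈ Finset.range (d 0 + d 1 + 1), (n : ℚ)⁻¹ * _) = 0
  apply Finset.sum_eq_zero
  intro n _
  match n with
  | 0 => norm_num
  | m + 1 => rw [upow_y0 m d hd, mul_zero]

/-- `F = x + y - log(1 - (eˣ-1)(e^y-1))` satisfies
`∂ₓ∂_y F = (∂ₓF)·(∂_yF)`, is symmetric in `x` and `y` (its coefficient on `x^i y^j`
equals its coefficient on `x^j y^i`), and `F(x,0) = x` (its coefficients in the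
monomials with `y`-exponent `0` agree with those of the series `x`). -/
theorem stmt4 :
    dX (dY F) = dX F * dY F ∧
    (∀ i j : ℕ, F (Finsupp.single 0 i + Finsupp.single 1 j) =
      F (Finsupp.single 0 j + Finsupp.single 1 i)) ∧
    (∀ d : Fin 2 →₀ ℕ, d 1 = 0 → F d = (MvPowerSeries.X 0 : MvPowerSeries (Fin 2) ℚ) d) := by
  refine ⟨?_, F_symm, ?_⟩
  · -- the PDE
    set u : MvPowerSeries (Fin 2) ℚ := (expX - 1) * (expY - 1) with hu
    set L : MvPowerSeries (Fin 2) ℚ := negLogOneSub u with hLdef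
    have hv : vlow u 1 := by
      intro e he
      have he0 : e = 0 := by
        ext a
        rcases fin2_cases a with rfl | rfl
        · simpa using (by omega : e 0 = 0)
        · simpa using (by omega : e 1 = 0)
      subst he0
      rw [hu, mps_mul_apply, Finsupp.antidiagonal_zero, Finset.sum_singleton]
      show (expX 0 - (1 : MvPowerSeries (Fin 2) ℚ) 0) * (expY 0 - (1 : MvPowerSeries (Fin 2) ℚ) 0) = 0
      rw [mps_one_apply, if_pos rfl]
      have h1 : expX 0 = 1 := by simp [expX]
      rw [h1]
      ring
    have hu0 : u 0 = 0 := hv 0 (by simp)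
    have hc : MvPowerSeries.constantCoeff (1 - u) ≠ 0 := by
      show (1 - u) 0 ≠ 0
      rw [sub_apply', hu0, mps_one_apply, if_pos rfl]
      norm_num
    have hinv := MvPowerSeries.mul_inv_cancel _ hc
    have cancel : ∀ A B : MvPowerSeries (Fin 2) ℚ, (1 - u) * A = (1 - u) * B → A = B := by
      intro A B h
      calc A = ((1 - u) * (1 - u)⁻¹) * A := by rw [hinv, one_mul]
        _ = (1 - u)⁻¹ * ((1 - u) * A) := by ring
        _ = (1 - u)⁻¹ * ((1 - u) * B) := by rw [h]
        _ = ((1 - u) * (1 - u)⁻¹) * B := by ring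
        _ = B := by rw [hinv, one_mul]
    have hux : dd 0 u = expX * (expY - 1) := by
      rw [hu, dd_mul 0 (expX - 1) (expY - 1), dd_sub 0 expX 1, dd_sub 0 expY 1,
        dd_one 0, dd0_expX, dd0_expY]
      ring
    have huy : dd 1 u = (expX - 1) * expY := by
      rw [hu, dd_mul 1 (expX - 1) (expY - 1), dd_sub 1 expX 1, dd_sub 1 expY 1,
        dd_one 1, dd1_expX, dd1_expY]
      ring
    have hx : (1 - u) * dd 0 L = expX * (expY - 1) := by
      rw [hLdef, dd_negLog 0 u hv, hux]
    have hy : (1 - u) * dd 1 L = (expX - 1) * expY := by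
      rw [hLdef, dd_negLog 1 u hv, huy]
    have h2 : (1 - u) * dd 0 (dd 1 L) = expX * expY + (expX * (expY - 1)) * dd 1 L := by
      have hdy := congrArg (dd 0) hy
      rw [dd_mul 0 (1 - u) (dd 1 L), dd_sub 0 1 u, dd_one 0, hux,
        dd_mul 0 (expX - 1) expY, dd_sub 0 expX 1, dd_one 0, dd0_expX, dd0_expY] at hdy
      linear_combination hdy
    have key : (1 - u) * ((1 - u) * dd 0 (dd 1 L))
        = (1 - u) * ((1 - u) * ((1 + dd 0 L) * (1 + dd 1 L))) := by
      calc (1 - u) * ((1 - u) * dd 0 (dd 1 L))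
          = (1 - u) * (expX * expY + (expX * (expY - 1)) * dd 1 L) := by rw [h2]
        _ = (1 - u) * (expX * expY) + (expX * (expY - 1)) * ((1 - u) * dd 1 L) := by ring
        _ = (1 - u) * (expX * expY) + (expX * (expY - 1)) * ((expX - 1) * expY) := by rw [hy]
        _ = ((1 - u) + expX * (expY - 1)) * ((1 - u) + (expX - 1) * expY) := by rw [hu]; ring
        _ = ((1 - u) + (1 - u) * dd 0 L) * ((1 - u) + (1 - u) * dd 1 L) := by rw [hx, hy]
        _ = (1 - u) * ((1 - u) * ((1 + dd 0 L) * (1 + dd 1 L))) := by ring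
    have hmain : dd 0 (dd 1 L) = (1 + dd 0 L) * (1 + dd 1 L) :=
      cancel _ _ (cancel _ _ key)
    have hF : F = MvPowerSeries.X 0 + MvPowerSeries.X 1 + L := rfl
    have hdXF : dd 0 F = 1 + dd 0 L := by
      rw [hF, dd_add 0 (MvPowerSeries.X 0 + MvPowerSeries.X 1) L,
        dd_add 0 (MvPowerSeries.X 0) (MvPowerSeries.X 1),
        dd_X_self 0, dd_X_ne 0 1 (by decide)]
      ring
    have hdYF : dd 1 F = 1 + dd 1 L := by
      rw [hF, dd_add 1 (MvPowerSeries.X 0 + MvPowerSeries.X 1) L,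
        dd_add 1 (MvPowerSeries.X 0) (MvPowerSeries.X 1),
        dd_X_self 1, dd_X_ne 1 0 (by decide)]
      ring
    show dd 0 (dd 1 F) = dd 0 F * dd 1 F
    rw [hdYF, hdXF, dd_add 0 1 (dd 1 L), dd_one 0, hmain]
    ring
  · -- F(x,0) = x
    intro d hd
    have hstep : F d = (MvPowerSeries.X 0 : MvPowerSeries (Fin 2) ℚ) d
        + (MvPowerSeries.X 1 : MvPowerSeries (Fin 2) ℚ) d
        + negLogOneSub ((expX - 1) * (expY - 1)) d := rfl
    rw [hstep, L_y0 d hd, add_zero, X_apply 1, if_neg, add_zero]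
    intro h
    rw [h] at hd
    simp [Finsupp.single_apply] at hd
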